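/- Let m ≥ 1 be an integer, let 0 < δ ≤ 1/4, let ℓ > 0 satisfy |A_c(m)| ≤ ℓ·c^{1/2+δ} for all integers c ≥ 1, and let x ≥ 10000 be a half-integer (x ∈ ℤ + 1/2). Then ∑_{⌊3x/4⌋ < c ≤ x−1/2} |A_c(m)|·c^{−3/2−δ}·(log(x/c))^{−1} ≤ 1.523·ℓ·log x, and ∑_{x+1/2 ≤ c ≤ ⌈5x/4⌉−1} |A_c(m)|·c^{−3/2−δ}·(log(c/x))^{−1} ≤ 1.142·ℓ·log x, where both sums range over positive integers c. -/

import Mathlib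

open Real Complex

/-- The Dedekind sum `s(d,c)`. -/
noncomputable def dedekindS (d c : ℕ) : ℝ :=
  ∑ r ∈ Finset.Ico 1 c,
    (r / c : ℝ) * ((d * r : ℝ) / c - ⌊(d * r : ℝ) / c⌋ - 1 / 2)

/-- The Kloosterman sum `A_c(n)`. -/
noncomputable def kloostermanA (c n : ℕ) : ℂ :=
  ∑ d ∈ (Finset.range c).filter (fun d => Nat.gcd d c = 1),
    Complex.exp (π * Complex.I * dedekindS d c) *
      Complex.exp (-2 * π * Complex.I * d * n / c)

/-- `τ(m)`: the number of positive divisors of `m`. -/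
def tau (m : ℕ) : ℕ := m.divisors.card

/-- The Riemann zeta function for real `s > 1`, given by its Dirichlet series. -/
noncomputable def zetaR (s : ℝ) : ℝ := ∑' n : ℕ, 1 / ((n : ℝ) + 1) ^ s

/-- `ω_o(c)`: the number of distinct odd primes dividing `c`. -/
def omegaOdd (c : ℕ) : ℕ := (c.primeFactors.filter (fun p => p ≠ 2)).card

lemma log_sub_log (b : ℝ) (hb : 2 < b) : 2 / b ≤ Real.log b - Real.log (b - 2) := by
  have hb0 : 0 < b := by linarith
  have hb2 : 0 < b - 2 := by linarith
  have h := Real.log_le_sub_one_of_pos (x := (b-2)/b) (by positivity)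
  have hd : Real.log ((b-2)/b) = Real.log (b-2) - Real.log b := Real.log_div (by linarith) (by linarith)
  rw [hd] at h
  have : (b - 2) / b - 1 = -(2/b) := by field_simp; ring
  linarith [this ▸ h]

lemma sum_inv_half (n : ℕ) (hn : 3 ≤ n) :
    ∑ j ∈ Finset.range n, (1 : ℝ) / (j + 1/2) ≤ 46/15 - Real.log 5 + Real.log (2*n - 1) := by
  induction n, hn using Nat.le_induction with
  | base =>
    norm_num [Finset.sum_range_succ]
  | succ n hn ih =>
    rw [Finset.sum_range_succ]
    have key : (1:ℝ) / (n + 1/2) ≤ Real.log (2*(n+1) - 1) - Real.log (2*n - 1) := by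
      have h := log_sub_log (2*(n:ℝ)+1) (by
        have h3 : (3:ℝ) ≤ (n:ℝ) := mod_cast hn
        linarith)
      have e1 : (2*(n:ℝ)+1) - 2 = 2*(n:ℝ) - 1 := by ring
      have e2 : (2*((n:ℝ)+1) - 1) = 2*(n:ℝ)+1 := by ring
      rw [e1] at h
      rw [show ((n:ℝ)+1/2) = (2*(n:ℝ)+1)/2 by ring]
      push_cast
      rw [e2]
      rw [div_div_eq_mul_div, one_mul]
      linarith
    push_cast at *
    linarith

lemma exp9 : Real.exp 9 ≤ 10000 := by
  have h := Real.exp_one_lt_d9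
  calc Real.exp 9 = (Real.exp 1)^(9:ℕ) := by rw [← Real.exp_nat_mul]; norm_num
    _ ≤ 2.7182818286^(9:ℕ) := pow_le_pow_left₀ (Real.exp_pos 1).le h.le 9
    _ ≤ 10000 := by norm_num

lemma sum_inv_half_le (n : ℕ) (x : ℝ) (hx : 10000 ≤ x) (hn : (n:ℝ) ≤ x/4 + 1/2) :
    ∑ j ∈ Finset.range n, (1:ℝ) / (j + 1/2) ≤ Real.log x + 46/15 - Real.log 10 := by
  have h3 : ∑ j ∈ Finset.range n, (1:ℝ)/(j+1/2)
      ≤ ∑ j ∈ Finset.range (max n 3), (1:ℝ)/(j+1/2) :=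
    Finset.sum_le_sum_of_subset_of_nonneg
      (Finset.range_subset_range.2 (le_max_left _ _)) (fun i _ _ => by positivity)
  have h4 := sum_inv_half (max n 3) (le_max_right _ _)
  have hm3 : (3:ℝ) ≤ ((max n 3 : ℕ):ℝ) := by exact_mod_cast le_max_right n 3
  have hmx : ((max n 3 : ℕ):ℝ) ≤ x/4 + 1/2 := by
    rcases max_cases n 3 with ⟨h, _⟩ | ⟨h, _⟩ <;> rw [h]
    · exact hn
    · norm_num; linarith
  have h5 : (2*((max n 3 : ℕ):ℝ) - 1) ≤ x/2 := by linarith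
  have h6 : Real.log (2*((max n 3 : ℕ):ℝ) - 1) ≤ Real.log (x/2) :=
    Real.log_le_log (by linarith) h5
  have h7 : Real.log (x/2) = Real.log x - Real.log 2 :=
    Real.log_div (by linarith) two_ne_zero
  have h8 : Real.log 10 = Real.log 2 + Real.log 5 := by
    rw [← Real.log_mul (by norm_num) (by norm_num)]; norm_num
  linarith

lemma inv_log_bound (c x : ℝ) (hc : 0 < c) (hcx : c < x) :
    (Real.log (x/c))⁻¹ ≤ x / (x - c) := by
  have hx0 : 0 < x := hc.trans hcx
  have h1 : (x - c)/x ≤ Real.log (x/c) := by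
    have h := Real.log_le_sub_one_of_pos (show (0:ℝ) < c/x by positivity)
    have h2 : Real.log (c/x) = - Real.log (x/c) := by
      rw [Real.log_div hc.ne' hx0.ne', Real.log_div hx0.ne' hc.ne']; ring
    have h3 : c/x - 1 = -((x-c)/x) := by field_simp; ring
    rw [h2, h3] at h
    linarith
  have h2 : (0:ℝ) < (x - c)/x := div_pos (by linarith) hx0
  calc (Real.log (x/c))⁻¹ ≤ ((x-c)/x)⁻¹ := inv_anti₀ h2 h1
    _ = x/(x-c) := by rw [inv_div]

theorem kloosterman_middle_sums_bound (m : ℕ) (hm : 1 ≤ m) (δ : ℝ) (hδ0 : 0 < δ)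
    (hδ : δ ≤ 1 / 4) (ℓ : ℝ) (hℓ0 : 0 < ℓ)
    (hℓ : ∀ c : ℕ, 1 ≤ c → ‖kloostermanA c m‖ ≤ ℓ * (c : ℝ) ^ ((1 : ℝ) / 2 + δ))
    (x : ℝ) (hx : 10000 ≤ x) (hhalf : ∃ k : ℤ, x = k + 1 / 2) :
    (∑' c : ℕ, if 3 * x / 4 < (c : ℝ) ∧ (c : ℝ) ≤ x - 1 / 2 then
        ‖kloostermanA c m‖ * (c : ℝ) ^ (-(3 : ℝ) / 2 - δ) * (Real.log (x / c))⁻¹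
      else 0) ≤ 1.523 * ℓ * Real.log x ∧
    (∑' c : ℕ, if x + 1 / 2 ≤ (c : ℝ) ∧ (c : ℝ) ≤ (⌈5 * x / 4⌉₊ : ℝ) - 1 then
        ‖kloostermanA c m‖ * (c : ℝ) ^ (-(3 : ℝ) / 2 - δ) * (Real.log ((c : ℝ) / x))⁻¹
      else 0) ≤ 1.142 * ℓ * Real.log x := by
  obtain ⟨k, hk⟩ := hhalf
  have hk0 : (0:ℤ) ≤ k := by
    by_contra h
    push_neg at h
    have hk1 : (k:ℝ) ≤ -1 := by exact_mod_cast Int.le_sub_one_of_lt h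
    linarith
  set K : ℕ := k.toNat with hKdef
  have hKk : ((K:ℤ):ℝ) = (k:ℝ) := by rw [hKdef, Int.toNat_of_nonneg hk0]
  have hKx : x = (K:ℝ) + 1/2 := by rw [hk]; push_cast at hKk ⊢; rw [hKk]
  have hx0 : (0:ℝ) < x := by linarith
  have hK : (K:ℝ) = x - 1/2 := by linarith
  have hlog4 : (9:ℝ) ≤ Real.log 10000 := by
    calc (9:ℝ) = Real.log (Real.exp 9) := (Real.log_exp 9).symm
      _ ≤ Real.log 10000 := Real.log_le_log (Real.exp_pos 9) exp9
  have hlogx : (9:ℝ) ≤ Real.log x :=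
    hlog4.trans (Real.log_le_log (by norm_num) hx)
  have hlog10 : (9:ℝ)/4 ≤ Real.log 10 := by
    have h4 : Real.log 10000 = 4 * Real.log 10 := by
      rw [show (10000:ℝ) = 10^(4:ℕ) by norm_num, Real.log_pow]; push_cast; ring
    linarith
  constructor
  · -- first sum
    set c₀ : ℕ := ⌊3*x/4⌋₊ + 1 with hc₀def
    have hc₀x : 3*x/4 < (c₀:ℝ) := by
      rw [hc₀def]; push_cast; exact Nat.lt_floor_add_one _
    have hsupp : ∀ c : ℕ, c ∉ Finset.Icc c₀ K →
        (if 3 * x / 4 < (c : ℝ) ∧ (c : ℝ) ≤ x - 1 / 2 then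
          ‖kloostermanA c m‖ * (c : ℝ) ^ (-(3 : ℝ) / 2 - δ) * (Real.log (x / c))⁻¹
        else 0) = 0 := by
      intro c hc
      rw [if_neg]
      rintro ⟨h1, h2⟩
      apply hc
      rw [Finset.mem_Icc]
      constructor
      · have hf : (⌊3*x/4⌋₊ : ℝ) < (c:ℝ) :=
          lt_of_le_of_lt (Nat.floor_le (by linarith)) h1
        have : ⌊3*x/4⌋₊ < c := by exact_mod_cast hf
        omega
      · have : (c:ℝ) ≤ (K:ℝ) := by rw [hK]; exact h2
        exact_mod_cast this
    rw [tsum_eq_sum hsupp]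
    have hterm : ∀ c ∈ Finset.Icc c₀ K,
        (if 3 * x / 4 < (c : ℝ) ∧ (c : ℝ) ≤ x - 1 / 2 then
          ‖kloostermanA c m‖ * (c : ℝ) ^ (-(3 : ℝ) / 2 - δ) * (Real.log (x / c))⁻¹
        else 0) ≤ ℓ * (1/(c:ℝ)) + ℓ * (1/(x - c)) := by
      intro c hc
      rw [Finset.mem_Icc] at hc
      obtain ⟨hc1, hc2⟩ := hc
      have hcl : 3*x/4 < (c:ℝ) := lt_of_lt_of_le hc₀x (by exact_mod_cast hc1)
      have hcu : (c:ℝ) ≤ x - 1/2 := by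
        have : (c:ℝ) ≤ (K:ℝ) := by exact_mod_cast hc2
        linarith
      have hcr0 : (0:ℝ) < c := by linarith
      have hcn1 : 1 ≤ c := by
        by_contra h
        push_neg at h
        interval_cases c
        · norm_num at hcr0
      have hcltx : (c:ℝ) < x := by linarith
      rw [if_pos ⟨hcl, hcu⟩]
      have hlogpos : 0 < Real.log (x/c) := Real.log_pos ((one_lt_div hcr0).2 hcltx)
      have hinv : (Real.log (x/c))⁻¹ ≤ x/(x - c) := inv_log_bound c x hcr0 hcltx
      have hv0 : (0:ℝ) ≤ (Real.log (x/c))⁻¹ := inv_nonneg.2 hlogpos.le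
      have hA := hℓ c hcn1
      have hstep : ‖kloostermanA c m‖ * (c : ℝ) ^ (-(3 : ℝ) / 2 - δ) *
          (Real.log (x / c))⁻¹ ≤ (ℓ * (c:ℝ)^((1:ℝ)/2+δ)) * (c:ℝ)^(-(3:ℝ)/2-δ) * (x/(x-c)) := by
        apply mul_le_mul _ hinv hv0 _
        · exact mul_le_mul_of_nonneg_right hA (Real.rpow_nonneg hcr0.le _)
        · positivity
      refine hstep.trans (le_of_eq ?_)
      have hcc : (c:ℝ)^((1:ℝ)/2+δ) * (c:ℝ)^(-(3:ℝ)/2-δ) = (c:ℝ)⁻¹ := by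
        rw [← Real.rpow_add hcr0, show (1:ℝ)/2+δ+(-(3:ℝ)/2-δ) = -1 by ring,
          Real.rpow_neg_one]
      have hxc0 : (0:ℝ) < x - c := by linarith
      calc (ℓ * (c:ℝ)^((1:ℝ)/2+δ)) * (c:ℝ)^(-(3:ℝ)/2-δ) * (x/(x-c))
          = ℓ * ((c:ℝ)^((1:ℝ)/2+δ) * (c:ℝ)^(-(3:ℝ)/2-δ)) * (x/(x-c)) := by ring
        _ = ℓ * (c:ℝ)⁻¹ * (x/(x-c)) := by rw [hcc]
        _ = ℓ * (1/(c:ℝ)) + ℓ * (1/(x - c)) := by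
            field_simp
            ring
    have hcard : ((Finset.Icc c₀ K).card : ℝ) ≤ x/4 + 1/2 := by
      rw [Nat.card_Icc]
      rcases le_or_gt c₀ (K+1) with h | h
      · have heq : ((K + 1 - c₀ : ℕ):ℝ) = ((K:ℝ) + 1) - (c₀:ℝ) := by
          push_cast [Nat.cast_sub h]
          ring
        rw [heq, hK]
        linarith
      · rw [Nat.sub_eq_zero_of_le h.le]
        norm_num
        linarith
    have hsum1 : ∑ c ∈ Finset.Icc c₀ K, (1:ℝ)/(c:ℝ) ≤ (x/4+1/2) * (4/(3*x)) := by
      calc ∑ c ∈ Finset.Icc c₀ K, (1:ℝ)/(c:ℝ)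
          ≤ (Finset.Icc c₀ K).card • (4/(3*x)) := by
            apply Finset.sum_le_card_nsmul
            intro c hc
            rw [Finset.mem_Icc] at hc
            have hcl : 3*x/4 < (c:ℝ) := lt_of_lt_of_le hc₀x (by exact_mod_cast hc.1)
            have h34 : (0:ℝ) < 3*x/4 := by linarith
            calc (1:ℝ)/(c:ℝ) ≤ 1/(3*x/4) := by
                  apply one_div_le_one_div_of_le h34 hcl.le
              _ = 4/(3*x) := by field_simp
        _ = ((Finset.Icc c₀ K).card : ℝ) * (4/(3*x)) := nsmul_eq_mul _ _
        _ ≤ (x/4+1/2) * (4/(3*x)) := by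
            apply mul_le_mul_of_nonneg_right hcard (by positivity)
    have hsum2 : ∑ c ∈ Finset.Icc c₀ K, (1:ℝ)/(x - (c:ℝ)) ≤ Real.log x + 46/15 - Real.log 10 := by
      rw [← Finset.Ico_add_one_right_eq_Icc, Finset.sum_Ico_eq_sum_range]
      set n := K + 1 - c₀ with hndef
      rw [← Finset.sum_range_reflect]
      have heq : ∀ j ∈ Finset.range n,
          (1:ℝ)/(x - ((c₀ + (n - 1 - j) : ℕ):ℝ)) = 1/((j:ℝ) + 1/2) := by
        intro j hj
        rw [Finset.mem_range] at hj
        have hc₀K : c₀ ≤ K := by omega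
        have h1 : c₀ + (n - 1 - j) = K - j := by omega
        have hjK : j ≤ K := by omega
        rw [h1]
        have h2 : ((K - j : ℕ):ℝ) = (K:ℝ) - (j:ℝ) := by
          push_cast [Nat.cast_sub hjK]
          ring
        rw [h2, hK, show x - ((x - 1/2) - (j:ℝ)) = (j:ℝ) + 1/2 by ring]
      rw [Finset.sum_congr rfl heq]
      apply sum_inv_half_le n x hx
      have := hcard
      rwa [Nat.card_Icc] at this
    calc ∑ c ∈ Finset.Icc c₀ K,
        (if 3 * x / 4 < (c : ℝ) ∧ (c : ℝ) ≤ x - 1 / 2 then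
          ‖kloostermanA c m‖ * (c : ℝ) ^ (-(3 : ℝ) / 2 - δ) * (Real.log (x / c))⁻¹
        else 0)
        ≤ ∑ c ∈ Finset.Icc c₀ K, (ℓ * (1/(c:ℝ)) + ℓ * (1/(x - c))) := Finset.sum_le_sum hterm
      _ = ℓ * (∑ c ∈ Finset.Icc c₀ K, (1:ℝ)/(c:ℝ))
          + ℓ * (∑ c ∈ Finset.Icc c₀ K, (1:ℝ)/(x - (c:ℝ))) := by
          rw [Finset.sum_add_distrib, Finset.mul_sum, Finset.mul_sum]
      _ ≤ 1.523 * ℓ * Real.log x := by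
          have hb1 : ℓ * (∑ c ∈ Finset.Icc c₀ K, (1:ℝ)/(c:ℝ)) ≤ ℓ * ((x/4+1/2) * (4/(3*x))) :=
            mul_le_mul_of_nonneg_left hsum1 hℓ0.le
          have hb2 : ℓ * (∑ c ∈ Finset.Icc c₀ K, (1:ℝ)/(x - (c:ℝ)))
              ≤ ℓ * (Real.log x + 46/15 - Real.log 10) :=
            mul_le_mul_of_nonneg_left hsum2 hℓ0.le
          have he : (x/4+1/2) * (4/(3*x)) = 1/3 + 2/(3*x) := by
            field_simp
            ring
          have h2x : 2/(3*x) ≤ 1/10000 := by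
            rw [div_le_div_iff₀ (by linarith) (by norm_num)]
            linarith
          have hp1 : ℓ * (2/(3*x)) ≤ ℓ * (1/10000) := mul_le_mul_of_nonneg_left h2x hℓ0.le
          have hp2 : ℓ * (9/4) ≤ ℓ * Real.log 10 := mul_le_mul_of_nonneg_left hlog10 hℓ0.le
          have hp3 : ℓ * 9 ≤ ℓ * Real.log x := mul_le_mul_of_nonneg_left hlogx hℓ0.le
          rw [he] at hb1
          linarith [hb1, hb2, hp1, hp2, hp3, hℓ0]
  · -- second sum
    obtain ⟨C, hCdef⟩ : ∃ C : ℕ, C = ⌈5*x/4⌉₊ - 1 := ⟨_, rfl⟩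
    have hceil1 : 1 ≤ ⌈5*x/4⌉₊ := Nat.one_le_ceil_iff.2 (by linarith)
    have hCr : (C:ℝ) = (⌈5*x/4⌉₊:ℝ) - 1 := by
      rw [hCdef]
      push_cast [Nat.cast_sub hceil1]
      ring
    have hCle : (C:ℝ) ≤ 5*x/4 := by
      have := Nat.ceil_lt_add_one (show (0:ℝ) ≤ 5*x/4 by linarith)
      rw [hCr]; linarith
    have hsupp : ∀ c : ℕ, c ∉ Finset.Icc (K+1) C →
        (if x + 1 / 2 ≤ (c : ℝ) ∧ (c : ℝ) ≤ (⌈5 * x / 4⌉₊ : ℝ) - 1 then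
          ‖kloostermanA c m‖ * (c : ℝ) ^ (-(3 : ℝ) / 2 - δ) * (Real.log ((c:ℝ) / x))⁻¹
        else 0) = 0 := by
      intro c hc
      rw [if_neg]
      rintro ⟨h1, h2⟩
      apply hc
      rw [Finset.mem_Icc]
      constructor
      · have : ((K:ℝ) + 1) ≤ (c:ℝ) := by rw [hK]; linarith
        exact_mod_cast this
      · have : (c:ℝ) ≤ (C:ℝ) := by rw [hCr]; exact h2
        exact_mod_cast this
    rw [tsum_eq_sum hsupp]
    have hterm : ∀ c ∈ Finset.Icc (K+1) C,
        (if x + 1 / 2 ≤ (c : ℝ) ∧ (c : ℝ) ≤ (⌈5 * x / 4⌉₊ : ℝ) - 1 then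
          ‖kloostermanA c m‖ * (c : ℝ) ^ (-(3 : ℝ) / 2 - δ) * (Real.log ((c:ℝ) / x))⁻¹
        else 0) ≤ ℓ * (1/((c:ℝ) - x)) := by
      intro c hc
      rw [Finset.mem_Icc] at hc
      obtain ⟨hc1, hc2⟩ := hc
      have hcl : x + 1/2 ≤ (c:ℝ) := by
        have : ((K:ℝ) + 1) ≤ (c:ℝ) := by exact_mod_cast hc1
        linarith
      have hcu : (c:ℝ) ≤ (⌈5 * x / 4⌉₊ : ℝ) - 1 := by
        have : (c:ℝ) ≤ (C:ℝ) := by exact_mod_cast hc2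
        linarith [hCr]
      rw [if_pos ⟨hcl, hcu⟩]
      have hcr0 : (0:ℝ) < c := by linarith
      have hcn1 : 1 ≤ c := le_trans (Nat.succ_le_succ (Nat.zero_le K)) hc1
      have hxltc : x < (c:ℝ) := by linarith
      have hlogpos : 0 < Real.log ((c:ℝ)/x) := Real.log_pos ((one_lt_div hx0).2 hxltc)
      have hinv : (Real.log ((c:ℝ)/x))⁻¹ ≤ (c:ℝ)/((c:ℝ) - x) := inv_log_bound x (c:ℝ) hx0 hxltc
      have hv0 : (0:ℝ) ≤ (Real.log ((c:ℝ)/x))⁻¹ := inv_nonneg.2 hlogpos.le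
      have hA := hℓ c hcn1
      have hstep : ‖kloostermanA c m‖ * (c : ℝ) ^ (-(3 : ℝ) / 2 - δ) *
          (Real.log ((c:ℝ) / x))⁻¹
          ≤ (ℓ * (c:ℝ)^((1:ℝ)/2+δ)) * (c:ℝ)^(-(3:ℝ)/2-δ) * ((c:ℝ)/((c:ℝ)-x)) := by
        apply mul_le_mul _ hinv hv0 _
        · exact mul_le_mul_of_nonneg_right hA (Real.rpow_nonneg hcr0.le _)
        · positivity
      refine hstep.trans (le_of_eq ?_)
      have hcc : (c:ℝ)^((1:ℝ)/2+δ) * (c:ℝ)^(-(3:ℝ)/2-δ) = (c:ℝ)⁻¹ := by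
        rw [← Real.rpow_add hcr0, show (1:ℝ)/2+δ+(-(3:ℝ)/2-δ) = -1 by ring,
          Real.rpow_neg_one]
      have hxc0 : (0:ℝ) < (c:ℝ) - x := by linarith
      calc (ℓ * (c:ℝ)^((1:ℝ)/2+δ)) * (c:ℝ)^(-(3:ℝ)/2-δ) * ((c:ℝ)/((c:ℝ)-x))
          = ℓ * ((c:ℝ)^((1:ℝ)/2+δ) * (c:ℝ)^(-(3:ℝ)/2-δ)) * ((c:ℝ)/((c:ℝ)-x)) := by ring
        _ = ℓ * (c:ℝ)⁻¹ * ((c:ℝ)/((c:ℝ)-x)) := by rw [hcc]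
        _ = ℓ * (1/((c:ℝ) - x)) := by
            field_simp
    have hsum2 : ∑ c ∈ Finset.Icc (K+1) C, ℓ * (1/((c:ℝ) - x))
        ≤ ℓ * (Real.log x + 46/15 - Real.log 10) := by
      rw [← Finset.Ico_add_one_right_eq_Icc, Finset.sum_Ico_eq_sum_range, ← Finset.mul_sum]
      apply mul_le_mul_of_nonneg_left _ hℓ0.le
      set n := C + 1 - (K+1) with hndef
      have heq : ∀ j ∈ Finset.range n,
          (1:ℝ)/(((K + 1 + j : ℕ):ℝ) - x) = 1/((j:ℝ) + 1/2) := by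
        intro j hj
        have h2 : ((K + 1 + j : ℕ):ℝ) = (K:ℝ) + 1 + (j:ℝ) := by push_cast; ring
        rw [h2, hK, show ((x - 1/2) + 1 + (j:ℝ)) - x = (j:ℝ) + 1/2 by ring]
      rw [Finset.sum_congr rfl heq]
      apply sum_inv_half_le n x hx
      rcases le_or_gt (K+1) (C+1) with h | h
      · have hKC : K ≤ C := by omega
        have heqn : ((C + 1 - (K+1) : ℕ):ℝ) = ((C:ℝ) + 1) - ((K:ℝ) + 1) := by
          rw [show C + 1 - (K+1) = C - K from by omega, Nat.cast_sub hKC]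
          ring
        rw [hndef, heqn, hK]
        linarith
      · rw [hndef, Nat.sub_eq_zero_of_le h.le]
        norm_num
        linarith
    calc ∑ c ∈ Finset.Icc (K+1) C,
        (if x + 1 / 2 ≤ (c : ℝ) ∧ (c : ℝ) ≤ (⌈5 * x / 4⌉₊ : ℝ) - 1 then
          ‖kloostermanA c m‖ * (c : ℝ) ^ (-(3 : ℝ) / 2 - δ) * (Real.log ((c:ℝ) / x))⁻¹
        else 0)
        ≤ ∑ c ∈ Finset.Icc (K+1) C, ℓ * (1/((c:ℝ) - x)) := Finset.sum_le_sum hterm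
      _ ≤ ℓ * (Real.log x + 46/15 - Real.log 10) := hsum2
      _ ≤ 1.142 * ℓ * Real.log x := by
          have hp2 : ℓ * (9/4) ≤ ℓ * Real.log 10 := mul_le_mul_of_nonneg_left hlog10 hℓ0.le
          have hp3 : ℓ * 9 ≤ ℓ * Real.log x := mul_le_mul_of_nonneg_left hlogx hℓ0.le
          linarith [hp2, hp3, hℓ0]
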